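/- The block circulant code C_BC[μ,λ,ω,ρ] with μ = 2^a·λ over a field of characteristic 2 has minimum distance exactly λρ+1. -/

import Mathlib

open Fin.NatCast in
/-- Membership in the block circulant code `C_BC[M, λ, ω, ρ]` in its evaluation-code
form: data blocks `d i : Fin ω → F`, parity blocks `p i : Fin ρ → F`; for every `i` the
`i`-th local codeword (data blocks `d i, …, d (i+λ-1)` and parity block `p i`) is the
evaluation of a message polynomial of degree `≤ λω - 1` at the evaluation points
`αo`/`αe`, with the point sets shared cyclically (with period `λ`) between consecutive
local codes. -/
def inBC {F : Type*} [Field F] (M lam ω ρ : ℕ) [NeZero M] [NeZero lam]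
    (αo : Fin lam → Fin ω → F) (αe : Fin lam → Fin ρ → F)
    (d : Fin M → Fin ω → F) (p : Fin M → Fin ρ → F) : Prop :=
  ∀ i : Fin M, ∃ m : Polynomial F, m.natDegree ≤ lam * ω - 1 ∧
    (∀ (j : Fin lam) (s : Fin ω),
      d (i + ((j : ℕ) : Fin M)) s = m.eval (αo (((i : ℕ) : Fin lam) + j) s)) ∧
    (∀ s : Fin ρ, p i s = m.eval (αe ((i : ℕ) : Fin lam) s))

/-- Hamming weight of a codeword of the block circulant code. -/
def bcWt {F : Type*} [Field F] [DecidableEq F] {M ω ρ : ℕ}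
    (d : Fin M → Fin ω → F) (p : Fin M → Fin ρ → F) : ℕ :=
  ∑ i : Fin M, ((Finset.univ.filter fun s => d i s ≠ 0).card +
    (Finset.univ.filter fun s => p i s ≠ 0).card)

open Fin.NatCast
open Finset Polynomial

lemma card_filter_prod {α β : Type*} [Fintype α] [Fintype β] (P : α → β → Prop)
    [∀ a b, Decidable (P a b)] :
    (Finset.univ.filter fun x : α × β => P x.1 x.2).card
      = ∑ a, (Finset.univ.filter fun b => P a b).card := by
  rw [Finset.card_filter, Fintype.sum_prod_type]
  congr 1; ext a; rw [Finset.card_filter]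

lemma card_eval_zero_le {F : Type*} [Field F] [DecidableEq F] {m : Polynomial F} (hm : m ≠ 0)
    {ι : Type*} [Fintype ι] [DecidableEq ι] (pts : ι → F) (hpts : Function.Injective pts) :
    (Finset.univ.filter fun x => m.eval (pts x) = 0).card ≤ m.natDegree := by
  calc (Finset.univ.filter fun x => m.eval (pts x) = 0).card
      ≤ m.roots.toFinset.card := by
        apply Finset.card_le_card_of_injOn pts
        · intro x hx
          simp only [Finset.mem_coe, Finset.mem_filter, Finset.mem_univ, true_and] at hx
          simp [Multiset.mem_toFinset, Polynomial.mem_roots, hm, Polynomial.IsRoot, hx]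
        · exact hpts.injOn
    _ ≤ Multiset.card m.roots := m.roots.toFinset_card_le
    _ ≤ m.natDegree := m.card_roots'

lemma card_filter_add_le {F : Type*} [Field F] [DecidableEq F] {α : Type*} [Fintype α] [DecidableEq α]
    (f g : α → F) :
    (Finset.univ.filter fun s => f s + g s ≠ 0).card
      ≤ (Finset.univ.filter fun s => f s ≠ 0).card + (Finset.univ.filter fun s => g s ≠ 0).card := by
  refine le_trans (Finset.card_le_card ?_) (Finset.card_union_le _ _)
  intro x hx
  simp only [Finset.mem_filter, Finset.mem_univ, true_and, Finset.mem_union] at hx ⊢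
  by_contra h
  push_neg at h
  simp [h.1, h.2] at hx

lemma grp_add {M lam : ℕ} [NeZero M] [NeZero lam] (hdvd : lam ∣ M) (i : Fin M) (j : Fin lam) :
    ((((i + ((j : ℕ) : Fin M)) : Fin M) : ℕ) : Fin lam) = (((i : ℕ) : Fin lam) + j) := by
  have hlM : lam ≤ M := Nat.le_of_dvd (NeZero.pos M) hdvd
  apply Fin.ext
  simp only [Fin.val_natCast, Fin.val_add]
  have hj : (j : ℕ) % M = (j : ℕ) := Nat.mod_eq_of_lt (lt_of_lt_of_le j.isLt hlM)
  rw [hj, Nat.mod_mod_of_dvd _ hdvd, Nat.mod_add_mod]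

lemma cover {M lam : ℕ} [NeZero M] [NeZero lam] (hMl : M = lam) (i k : Fin M) :
    ∃ j : Fin lam, k = i + ((j : ℕ) : Fin M) := by
  refine ⟨⟨(k.val + lam - i.val) % lam, Nat.mod_lt _ (NeZero.pos lam)⟩, ?_⟩
  apply Fin.ext
  simp only [Fin.val_add, Fin.val_natCast]
  have hi : i.val < lam := hMl ▸ i.isLt
  have hk : k.val < lam := hMl ▸ k.isLt
  subst hMl
  rw [Nat.mod_mod_of_dvd _ dvd_rfl, Nat.add_mod, Nat.mod_mod_of_dvd _ dvd_rfl, ← Nat.add_mod]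
  have : i.val + (k.val + M - i.val) = k.val + M := by omega
  rw [this, Nat.add_mod_right, Nat.mod_eq_of_lt hk]

lemma sum_split {H : ℕ} {M : ℕ} (hM : M = H + H) (w : Fin M → ℕ) :
    ∑ k, w k = (∑ x : Fin H, w ⟨x.val, by omega⟩) + ∑ x : Fin H, w ⟨x.val + H, by omega⟩ := by
  subst hM
  rw [Fin.sum_univ_add]
  congr 1
  apply Finset.sum_congr rfl; intro x _
  congr 1
  apply Fin.ext; simp [Fin.natAdd]; omega

lemma two_filters_le {F : Type*} [Field F] [DecidableEq F] {m : Polynomial F} (hm : m ≠ 0)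
    {ι κ : Type*} [Fintype ι] [Fintype κ] [DecidableEq ι] [DecidableEq κ]
    (pts : ι ⊕ κ → F) (hpts : Function.Injective pts) :
    (Finset.univ.filter fun x : ι => m.eval (pts (Sum.inl x)) = 0).card
      + (Finset.univ.filter fun y : κ => m.eval (pts (Sum.inr y)) = 0).card ≤ m.natDegree := by
  rw [← Finset.card_disjSum]
  calc _ ≤ m.roots.toFinset.card := by
        apply Finset.card_le_card_of_injOn pts
        · intro x hx
          rw [Finset.mem_coe, Finset.mem_disjSum] at hx
          have : m.eval (pts x) = 0 := by
            rcases hx with ⟨a, ha, rfl⟩ | ⟨b, hb, rfl⟩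
            · exact (Finset.mem_filter.1 ha).2
            · exact (Finset.mem_filter.1 hb).2
          simp [Multiset.mem_toFinset, Polynomial.mem_roots, hm, Polynomial.IsRoot, this]
        · exact hpts.injOn
    _ ≤ Multiset.card m.roots := m.roots.toFinset_card_le
    _ ≤ m.natDegree := m.card_roots'


section Base
variable {F : Type*} [Field F] [DecidableEq F] {lam ω ρ : ℕ} [NeZero lam]
  (αo : Fin lam → Fin ω → F) (αe : Fin lam → Fin ρ → F)

lemma base_case (hω : 0 < ω)
    (hinj : Function.Injective
      (Sum.elim (fun x : Fin lam × Fin ω => αo x.1 x.2)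
                (fun x : Fin lam × Fin ρ => αe x.1 x.2)))
    (d : Fin lam → Fin ω → F) (p : Fin lam → Fin ρ → F)
    (hin : inBC lam lam ω ρ αo αe d p) (hne : d ≠ 0 ∨ p ≠ 0) :
    lam * ρ + 1 ≤ bcWt d p := by
  have hlo : 1 ≤ lam * ω := Nat.mul_pos (NeZero.pos lam) hω
  choose m hdeg hdata hpar using hin
  -- every window covers every block
  have key : ∀ i k : Fin lam, ∀ s, d k s = (m i).eval (αo ((k : ℕ) : Fin lam) s) := by
    intro i k s
    obtain ⟨j, hj⟩ := cover (M := lam) rfl i k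
    rw [hj, hdata i j s, ← grp_add (M := lam) dvd_rfl i j]
  have hinjo : Function.Injective (fun x : Fin lam × Fin ω => αo x.1 x.2) :=
    hinj.comp Sum.inl_injective
  -- all polynomials are equal
  have meq : ∀ i i' : Fin lam, m i = m i' := by
    intro i i'
    rw [← sub_eq_zero]
    by_contra hq
    have h1 : ((Finset.univ.filter fun x : Fin lam × Fin ω =>
        (m i - m i').eval (αo x.1 x.2) = 0)).card ≤ (m i - m i').natDegree :=
      card_eval_zero_le hq _ hinjo
    have h2 : (Finset.univ.filter fun x : Fin lam × Fin ω =>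
        (m i - m i').eval (αo x.1 x.2) = 0) = Finset.univ := by
      apply Finset.filter_true_of_mem
      intro x _
      have hx : ((((x.1 : ℕ) : Fin lam) : ℕ) : Fin lam) = x.1 := by
        simp [Fin.cast_val_eq_self]
      rw [Polynomial.eval_sub]
      have k1 := key i x.1 x.2
      have k2 := key i' x.1 x.2
      rw [Fin.cast_val_eq_self] at k1 k2
      rw [← k1, ← k2, sub_self]
    rw [h2, Finset.card_univ, Fintype.card_prod, Fintype.card_fin, Fintype.card_fin] at h1
    have h3 := Polynomial.natDegree_sub_le (m i) (m i')
    have := hdeg i; have := hdeg i'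
    omega
  set m0 := m 0 with hm0
  have hd : ∀ k s, d k s = m0.eval (αo k s) := by
    intro k s
    have := key 0 k s
    rwa [Fin.cast_val_eq_self] at this
  have hp : ∀ k s, p k s = m0.eval (αe k s) := by
    intro k s
    have := hpar k s
    rwa [Fin.cast_val_eq_self, meq k 0] at this
  have hm0ne : m0 ≠ 0 := by
    intro h0
    rcases hne with h | h <;> apply h <;> funext k s
    · rw [hd k s, h0]; simp
    · rw [hp k s, h0]; simp
  -- counting
  have hzero := two_filters_le hm0ne
      (Sum.elim (fun x : Fin lam × Fin ω => αo x.1 x.2)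
                (fun x : Fin lam × Fin ρ => αe x.1 x.2)) hinj
  simp only [Sum.elim_inl, Sum.elim_inr] at hzero
  have hwd : (∑ i : Fin lam, (Finset.univ.filter fun s => d i s ≠ 0).card)
      = (Finset.univ.filter fun x : Fin lam × Fin ω => ¬ (m0.eval (αo x.1 x.2) = 0)).card := by
    rw [card_filter_prod (fun a b => ¬ (m0.eval (αo a b) = 0))]
    apply Finset.sum_congr rfl
    intro i _
    congr 1
    ext s
    simp [hd]
  have hwp : (∑ i : Fin lam, (Finset.univ.filter fun s => p i s ≠ 0).card)
      = (Finset.univ.filter fun x : Fin lam × Fin ρ => ¬ (m0.eval (αe x.1 x.2) = 0)).card := by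
    rw [card_filter_prod (fun a b => ¬ (m0.eval (αe a b) = 0))]
    apply Finset.sum_congr rfl
    intro i _
    congr 1
    ext s
    simp [hp]
  have hco : (Finset.univ.filter fun x : Fin lam × Fin ω => m0.eval (αo x.1 x.2) = 0).card
      + (Finset.univ.filter fun x : Fin lam × Fin ω => ¬ (m0.eval (αo x.1 x.2) = 0)).card
      = lam * ω := by
    rw [Finset.card_filter_add_card_filter_not]
    simp [Finset.card_univ]
  have hce : (Finset.univ.filter fun x : Fin lam × Fin ρ => m0.eval (αe x.1 x.2) = 0).card
      + (Finset.univ.filter fun x : Fin lam × Fin ρ => ¬ (m0.eval (αe x.1 x.2) = 0)).card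
      = lam * ρ := by
    rw [Finset.card_filter_add_card_filter_not]
    simp [Finset.card_univ]
  have hdegm0 : m0.natDegree ≤ lam * ω - 1 := hdeg 0
  have hzero' : (Finset.univ.filter fun x : Fin lam × Fin ω => m0.eval (αo x.1 x.2) = 0).card
      + (Finset.univ.filter fun x : Fin lam × Fin ρ => m0.eval (αe x.1 x.2) = 0).card
      ≤ m0.natDegree := by convert hzero using 3 <;> exact Finset.filter_congr_decidable _ _ _
  rw [bcWt, Finset.sum_add_distrib, hwd, hwp]
  omega

end Base


lemma char2_cancel {F : Type*} [Field F] [CharP F 2] {x y : F} (h : x + y = 0) : y = x := by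
  have hx : x = -y := add_eq_zero_iff_eq_neg.mp h
  rw [hx, CharTwo.neg_eq]

section Step
variable {F : Type*} [Field F] [DecidableEq F] [CharP F 2] {lam ω ρ : ℕ} [NeZero lam]
  {αo : Fin lam → Fin ω → F} {αe : Fin lam → Fin ρ → F}

lemma step_case {H M : ℕ} [NeZero H] [NeZero M] (hM2 : M = H + H) (hdvd : lam ∣ H)
    (IH : ∀ (d : Fin H → Fin ω → F) (p : Fin H → Fin ρ → F),
      inBC H lam ω ρ αo αe d p → (d ≠ 0 ∨ p ≠ 0) → lam * ρ + 1 ≤ bcWt d p)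
    (d : Fin M → Fin ω → F) (p : Fin M → Fin ρ → F)
    (hin : inBC M lam ω ρ αo αe d p) (hne : d ≠ 0 ∨ p ≠ 0) :
    lam * ρ + 1 ≤ bcWt d p := by
  have hH : 0 < H := NeZero.pos H
  have hlH : lam ≤ H := Nat.le_of_dvd hH hdvd
  have hHM : H < M := by omega
  obtain ⟨c, hc⟩ := hdvd
  have hdvdM : lam ∣ M := by rw [hM2, hc]; exact ⟨c + c, by ring⟩
  set Hm : Fin M := ⟨H, hHM⟩ with hHm
  set ι : Fin H → Fin M := Fin.castLE (le_of_lt hHM) with hι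
  have hival : ∀ x : Fin H, (ι x : ℕ) = (x : ℕ) := fun x => rfl
  choose m hdeg hdata hpar using hin
  -- group facts
  have hg1 : ∀ x : Fin H, (((ι x : Fin M) : ℕ) : Fin lam) = ((x : ℕ) : Fin lam) :=
    fun x => rfl
  have hg2 : ∀ k : Fin M, (((k + Hm : Fin M) : ℕ) : Fin lam) = ((k : ℕ) : Fin lam) := by
    intro k
    apply Fin.ext
    have hHmv : (Hm : ℕ) = H := rfl
    rw [Fin.val_natCast, Fin.val_natCast, Fin.val_add, hHmv,
      Nat.mod_mod_of_dvd _ hdvdM, hc, Nat.add_mul_mod_self_left]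
  -- index value facts (for a window index i : Fin H and j : Fin lam)
  have hjM : ∀ j : Fin lam, (((j : ℕ) : Fin M) : ℕ) = (j : ℕ) := by
    intro j
    rw [Fin.val_natCast]
    exact Nat.mod_eq_of_lt (by omega)
  have hjH : ∀ j : Fin lam, (((j : ℕ) : Fin H) : ℕ) = (j : ℕ) := by
    intro j
    rw [Fin.val_natCast]
    exact Nat.mod_eq_of_lt (by omega)
  have hA : ∀ (i : Fin H) (j : Fin lam),
      ((i + ((j : ℕ) : Fin H) : Fin H) : ℕ) = ((i : ℕ) + (j : ℕ)) % H := by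
    intro i j
    rw [Fin.val_add, hjH]
  have hB : ∀ (i : Fin H) (j : Fin lam),
      ((ι i + ((j : ℕ) : Fin M) : Fin M) : ℕ) = (i : ℕ) + (j : ℕ) := by
    intro i j
    rw [Fin.val_add, hjM, hival]
    exact Nat.mod_eq_of_lt (by omega)
  have hiHm : ∀ i : Fin H, ((ι i + Hm : Fin M) : ℕ) = (i : ℕ) + H := by
    intro i
    have hHmv : (Hm : ℕ) = H := rfl
    rw [Fin.val_add, hival, hHmv]
    exact Nat.mod_eq_of_lt (by omega)
  have hC : ∀ (i : Fin H) (j : Fin lam),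
      ((ι i + Hm + ((j : ℕ) : Fin M) : Fin M) : ℕ) = ((i : ℕ) + (j : ℕ) + H) % M := by
    intro i j
    rw [Fin.val_add, hjM, hiHm]
    rw [show (i : ℕ) + H + (j : ℕ) = (i : ℕ) + (j : ℕ) + H by omega]
  -- the two case-split index identities
  have hsplit : ∀ (i : Fin H) (j : Fin lam),
      (ι (i + ((j : ℕ) : Fin H)) = ι i + ((j : ℕ) : Fin M)
        ∧ ι (i + ((j : ℕ) : Fin H)) + Hm = ι i + Hm + ((j : ℕ) : Fin M))
      ∨ (ι (i + ((j : ℕ) : Fin H)) = ι i + Hm + ((j : ℕ) : Fin M)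
        ∧ ι (i + ((j : ℕ) : Fin H)) + Hm = ι i + ((j : ℕ) : Fin M)) := by
    intro i j
    have hiv : (i : ℕ) < H := i.isLt
    have hjv : (j : ℕ) < lam := j.isLt
    have hHmv : (Hm : ℕ) = H := rfl
    by_cases ht : (i : ℕ) + (j : ℕ) < H
    · left
      constructor
      · apply Fin.ext
        rw [hival, hA, hB, Nat.mod_eq_of_lt ht]
      · apply Fin.ext
        rw [Fin.val_add, hival, hA, hC, hHmv, Nat.mod_eq_of_lt ht]
    · right
      have hmodH : ((i : ℕ) + (j : ℕ)) % H = (i : ℕ) + (j : ℕ) - H := by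
        rw [Nat.mod_eq_sub_mod (by omega), Nat.mod_eq_of_lt (by omega)]
      constructor
      · apply Fin.ext
        rw [hival, hA, hC, hmodH, Nat.mod_eq_sub_mod (by omega), Nat.mod_eq_of_lt (by omega)]
        omega
      · apply Fin.ext
        rw [Fin.val_add, hival, hA, hB, hmodH, hHmv]
        rw [show (i : ℕ) + (j : ℕ) - H + H = (i : ℕ) + (j : ℕ) by omega,
          Nat.mod_eq_of_lt (by omega)]
  -- the folded codeword
  set d' : Fin H → Fin ω → F := fun x s => d (ι x) s + d (ι x + Hm) s with hd'
  set p' : Fin H → Fin ρ → F := fun x s => p (ι x) s + p (ι x + Hm) s with hp'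
  by_cases hz : d' = 0 ∧ p' = 0
  · -- folded codeword is zero: original is periodic
    have hperd : ∀ x : Fin H, ∀ s, d (ι x + Hm) s = d (ι x) s := by
      intro x s
      apply char2_cancel
      have := congrFun (congrFun hz.1 x) s
      simpa [hd'] using this
    have hperp : ∀ x : Fin H, ∀ s, p (ι x + Hm) s = p (ι x) s := by
      intro x s
      apply char2_cancel
      have := congrFun (congrFun hz.2 x) s
      simpa [hp'] using this
    -- every k : Fin M is ι x or ι x + Hm
    have hrepr : ∀ k : Fin M, (∃ x : Fin H, k = ι x) ∨ (∃ x : Fin H, k = ι x + Hm) := by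
      intro k
      by_cases hk : (k : ℕ) < H
      · exact Or.inl ⟨⟨k.val, hk⟩, Fin.ext rfl⟩
      · refine Or.inr ⟨⟨k.val - H, by omega⟩, Fin.ext ?_⟩
        rw [hiHm]
        simp only
        omega
    set d'' : Fin H → Fin ω → F := fun x s => d (ι x) s with hd''
    set p'' : Fin H → Fin ρ → F := fun x s => p (ι x) s with hp''
    have hin'' : inBC H lam ω ρ αo αe d'' p'' := by
      intro i
      refine ⟨m (ι i), hdeg _, ?_, ?_⟩
      · intro j s
        have h1 := hdata (ι i) j s
        rw [hg1 i] at h1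
        show d (ι (i + ((j : ℕ) : Fin H))) s = _
        rcases hsplit i j with ⟨e1, _⟩ | ⟨e1, e2⟩
        · rw [e1, h1]
        · have : d (ι (i + ((j : ℕ) : Fin H))) s
              = d (ι (i + ((j : ℕ) : Fin H)) + Hm) s := by
            rcases hrepr (ι (i + ((j : ℕ) : Fin H))) with ⟨x, hx⟩ | ⟨x, hx⟩
            · rw [hx, hperd]
            · exfalso
              have := congrArg Fin.val hx
              rw [hival, hiHm] at this
              have h1' : (↑(i + ((j : ℕ) : Fin H)) : ℕ) < H := (i + _).isLt
              omega
          rw [this, e2, h1]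
      · intro s
        exact hpar (ι i) s
    have hne'' : d'' ≠ 0 ∨ p'' ≠ 0 := by
      rcases hne with h | h
      · left
        intro h0
        apply h
        funext k s
        rcases hrepr k with ⟨x, rfl⟩ | ⟨x, rfl⟩
        · have := congrFun (congrFun h0 x) s
          simpa [hd''] using this
        · rw [hperd]
          have := congrFun (congrFun h0 x) s
          simpa [hd''] using this
      · right
        intro h0
        apply h
        funext k s
        rcases hrepr k with ⟨x, rfl⟩ | ⟨x, rfl⟩
        · have := congrFun (congrFun h0 x) s
          simpa [hp''] using this
        · rw [hperp]
          have := congrFun (congrFun h0 x) s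
          simpa [hp''] using this
    have hwt : bcWt d'' p'' ≤ bcWt d p := by
      show bcWt d'' p'' ≤ ∑ k : Fin M,
        ((Finset.univ.filter fun s => d k s ≠ 0).card
          + (Finset.univ.filter fun s => p k s ≠ 0).card)
      rw [sum_split hM2]
      exact Nat.le_add_right _ _
    exact le_trans (IH d'' p'' hin'' hne'') hwt
  · -- folded codeword is nonzero: it is a codeword of the half-length code
    have hne' : d' ≠ 0 ∨ p' ≠ 0 := by tauto
    have hin' : inBC H lam ω ρ αo αe d' p' := by
      intro i
      refine ⟨m (ι i) + m (ι i + Hm), ?_, ?_, ?_⟩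
      · exact le_trans (Polynomial.natDegree_add_le _ _) (max_le (hdeg _) (hdeg _))
      · intro j s
        have h1 := hdata (ι i) j s
        have h2 := hdata (ι i + Hm) j s
        rw [hg2 (ι i), hg1 i] at h2
        rw [hg1 i] at h1
        show d (ι (i + ((j : ℕ) : Fin H))) s + d (ι (i + ((j : ℕ) : Fin H)) + Hm) s = _
        rw [Polynomial.eval_add]
        rcases hsplit i j with ⟨e1, e2⟩ | ⟨e1, e2⟩
        · rw [e2, e1, h1, h2]
        · rw [e2, e1, h1, h2, add_comm]
      · intro s
        have h1 := hpar (ι i) s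
        have h2 := hpar (ι i + Hm) s
        rw [hg2 (ι i), hg1 i] at h2
        rw [hg1 i] at h1
        show p (ι i) s + p (ι i + Hm) s = _
        rw [Polynomial.eval_add, h1, h2]
    have hwt : bcWt d' p' ≤ bcWt d p := by
      show bcWt d' p' ≤ ∑ k : Fin M,
        ((Finset.univ.filter fun s => d k s ≠ 0).card
          + (Finset.univ.filter fun s => p k s ≠ 0).card)
      rw [sum_split hM2, bcWt]
      have hle : ∀ x : Fin H,
          ((Finset.univ.filter fun s => d' x s ≠ 0).card
            + (Finset.univ.filter fun s => p' x s ≠ 0).card)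
          ≤ (((Finset.univ.filter fun s => d (ι x) s ≠ 0).card
              + (Finset.univ.filter fun s => p (ι x) s ≠ 0).card)
            + ((Finset.univ.filter fun s => d (ι x + Hm) s ≠ 0).card
              + (Finset.univ.filter fun s => p (ι x + Hm) s ≠ 0).card)) := by
        intro x
        have h1 := card_filter_add_le (fun s => d (ι x) s) (fun s => d (ι x + Hm) s)
        have h2 := card_filter_add_le (fun s => p (ι x) s) (fun s => p (ι x + Hm) s)
        have e1 : (Finset.univ.filter fun s => d' x s ≠ 0).card
            = (Finset.univ.filter fun s => d (ι x) s + d (ι x + Hm) s ≠ 0).card := rfl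
        have e2 : (Finset.univ.filter fun s => p' x s ≠ 0).card
            = (Finset.univ.filter fun s => p (ι x) s + p (ι x + Hm) s ≠ 0).card := rfl
        rw [e1, e2]
        omega
      calc ∑ x : Fin H, ((Finset.univ.filter fun s => d' x s ≠ 0).card
            + (Finset.univ.filter fun s => p' x s ≠ 0).card)
          ≤ ∑ x : Fin H, (((Finset.univ.filter fun s => d (ι x) s ≠ 0).card
              + (Finset.univ.filter fun s => p (ι x) s ≠ 0).card)
            + ((Finset.univ.filter fun s => d (ι x + Hm) s ≠ 0).card
              + (Finset.univ.filter fun s => p (ι x + Hm) s ≠ 0).card)) :=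
            Finset.sum_le_sum fun x _ => hle x
        _ = _ := by
            rw [Finset.sum_add_distrib]
            congr 1
            apply Finset.sum_congr rfl
            intro x _
            have he : (ι x + Hm : Fin M) = ⟨(x : ℕ) + H, by omega⟩ := by
              apply Fin.ext
              rw [hiHm]
            rw [he]
    exact le_trans (IH d' p' hin' hne') hwt

end Step

section Construct
variable {F : Type*} [Field F] [DecidableEq F] {lam ω ρ : ℕ} [NeZero lam]
  {αo : Fin lam → Fin ω → F} {αe : Fin lam → Fin ρ → F}

lemma exists_word (hω : 0 < ω) {M : ℕ} [NeZero M] (hdvd : lam ∣ M) (hlM : lam ≤ M)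
    (hinj : Function.Injective
      (Sum.elim (fun x : Fin lam × Fin ω => αo x.1 x.2)
                (fun x : Fin lam × Fin ρ => αe x.1 x.2))) :
    ∃ (d : Fin M → Fin ω → F) (p : Fin M → Fin ρ → F),
      inBC M lam ω ρ αo αe d p ∧ (d ≠ 0 ∨ p ≠ 0) ∧ bcWt d p = lam * ρ + 1 := by
  have hlam : 0 < lam := NeZero.pos lam
  obtain ⟨c, hc⟩ := hdvd
  have hc1 : 1 ≤ c := by
    rcases Nat.eq_zero_or_pos c with rfl | h
    · exfalso
      rw [Nat.mul_zero] at hc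
      exact (NeZero.ne M) hc
    · exact h
  set g0 : Fin lam := ⟨lam - 1, by omega⟩ with hg0
  set s0 : Fin ω := ⟨0, hω⟩ with hs0
  set T : Finset (Fin lam × Fin ω) := Finset.univ.erase (g0, s0) with hT
  set m : Polynomial F := ∏ x ∈ T, (Polynomial.X - Polynomial.C (αo x.1 x.2)) with hm
  set k0 : Fin M := ⟨lam - 1, by omega⟩ with hk0
  -- degree of m
  have hmon : ∀ x ∈ T, (Polynomial.X - Polynomial.C (αo x.1 x.2)).Monic :=
    fun x _ => Polynomial.monic_X_sub_C _
  have hmne : m ≠ 0 := (Polynomial.monic_prod_of_monic T _ hmon).ne_zero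
  have hcardT : T.card = lam * ω - 1 := by
    rw [hT, Finset.card_erase_of_mem (Finset.mem_univ _), Finset.card_univ,
      Fintype.card_prod, Fintype.card_fin, Fintype.card_fin]
  have hdegm : m.natDegree = lam * ω - 1 := by
    rw [hm, Polynomial.natDegree_prod_of_monic _ _ hmon]
    simp [Polynomial.natDegree_X_sub_C, hcardT]
  -- evaluation facts
  have E1 : ∀ (t : Fin lam) (s : Fin ω), (t, s) ≠ (g0, s0) → m.eval (αo t s) = 0 := by
    intro t s hne
    rw [hm, Polynomial.eval_prod]
    apply Finset.prod_eq_zero (i := (t, s))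
    · rw [hT, Finset.mem_erase]
      exact ⟨hne, Finset.mem_univ _⟩
    · simp
  have E2 : m.eval (αo g0 s0) ≠ 0 := by
    rw [hm, Polynomial.eval_prod]
    apply Finset.prod_ne_zero_iff.2
    intro x hx
    simp only [Polynomial.eval_sub, Polynomial.eval_X, Polynomial.eval_C]
    rw [sub_ne_zero]
    intro heq
    have : ((g0, s0) : Fin lam × Fin ω) = x := by
      have := hinj (a₁ := Sum.inl (g0, s0)) (a₂ := Sum.inl x) (by simpa using heq)
      exact Sum.inl.inj this
    rw [hT, Finset.mem_erase] at hx
    exact hx.1 this.symm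
  have E3 : ∀ (t : Fin lam) (s : Fin ρ), m.eval (αe t s) ≠ 0 := by
    intro t s
    rw [hm, Polynomial.eval_prod]
    apply Finset.prod_ne_zero_iff.2
    intro x hx
    simp only [Polynomial.eval_sub, Polynomial.eval_X, Polynomial.eval_C]
    rw [sub_ne_zero]
    intro heq
    exact absurd (hinj (a₁ := Sum.inr (t, s)) (a₂ := Sum.inl x) (by simpa using heq))
      (by simp)
  -- the codeword
  set d : Fin M → Fin ω → F := fun k s => if k = k0 ∧ s = s0 then m.eval (αo g0 s0) else 0
    with hd
  set p : Fin M → Fin ρ → F := fun i s =>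
    if (i : ℕ) < lam then m.eval (αe ((i : ℕ) : Fin lam) s) else 0 with hp
  -- key index equivalence for in-support windows
  have hkey : ∀ (i : Fin M) (j : Fin lam), (i : ℕ) < lam →
      ((i + ((j : ℕ) : Fin M) : Fin M) = k0 ↔ (((i : ℕ) : Fin lam) + j = g0)) := by
    intro i j hi
    have hjM : (((j : ℕ) : Fin M) : ℕ) = (j : ℕ) := by
      rw [Fin.val_natCast]; exact Nat.mod_eq_of_lt (by omega)
    have hval : ((i + ((j : ℕ) : Fin M) : Fin M) : ℕ) = ((i : ℕ) + (j : ℕ)) % M := by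
      rw [Fin.val_add, hjM]
    have hgval : ((((i : ℕ) : Fin lam) + j : Fin lam) : ℕ) = ((i : ℕ) + (j : ℕ)) % lam := by
      rw [Fin.val_add, Fin.val_natCast, Nat.mod_add_mod]
    have hk0v : (k0 : ℕ) = lam - 1 := rfl
    have hg0v : (g0 : ℕ) = lam - 1 := rfl
    have ht : (i : ℕ) + (j : ℕ) ≤ 2 * lam - 2 := by
      have := j.isLt; omega
    have main : (((i : ℕ) + (j : ℕ)) % M = lam - 1)
        ↔ (((i : ℕ) + (j : ℕ)) % lam = lam - 1) := by
      rcases Nat.lt_or_ge ((i : ℕ) + (j : ℕ)) lam with h | h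
      · rw [Nat.mod_eq_of_lt (by omega), Nat.mod_eq_of_lt h]
      · rcases Nat.eq_or_lt_of_le hc1 with h1 | h1
        · have hMl : M = lam := by rw [hc, ← h1, Nat.mul_one]
          have e1 : ((i : ℕ) + (j : ℕ)) % M % lam = ((i : ℕ) + (j : ℕ)) % lam :=
            Nat.mod_mod_of_dvd _ ⟨c, hc⟩
          have e2 : ((i : ℕ) + (j : ℕ)) % M % lam = ((i : ℕ) + (j : ℕ)) % M :=
            Nat.mod_eq_of_lt (lt_of_lt_of_le (Nat.mod_lt _ (NeZero.pos M)) (le_of_eq hMl))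
          rw [← e1, e2]
        · have h2 : 2 * lam ≤ M := by
            calc 2 * lam ≤ c * lam := by
                  apply Nat.mul_le_mul_right; omega
              _ = M := by rw [hc]; ring
          rw [Nat.mod_eq_of_lt (by omega), Nat.mod_eq_sub_mod h, Nat.mod_eq_of_lt (by omega)]
          omega
    constructor
    · intro h
      apply Fin.ext
      rw [hgval]
      have hv := congrArg Fin.val h
      rw [hval] at hv
      exact (main.1 (hv.trans hk0v)).trans hg0v.symm
    · intro h
      apply Fin.ext
      rw [hval]
      have hv := congrArg Fin.val h
      rw [hgval] at hv
      exact (main.2 (hv.trans hg0v)).trans hk0v.symm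
  -- out-of-support windows avoid k0
  have hout : ∀ (i : Fin M) (j : Fin lam), ¬ ((i : ℕ) < lam) →
      (i + ((j : ℕ) : Fin M) : Fin M) ≠ k0 := by
    intro i j hi hne
    have hjM : (((j : ℕ) : Fin M) : ℕ) = (j : ℕ) := by
      rw [Fin.val_natCast]; exact Nat.mod_eq_of_lt (by omega)
    have hval := congrArg Fin.val hne
    rw [Fin.val_add, hjM] at hval
    have hk0v : (k0 : ℕ) = lam - 1 := rfl
    rw [hk0v] at hval
    have hiM : (i : ℕ) < M := i.isLt
    have hjl : (j : ℕ) < lam := j.isLt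
    rcases Nat.lt_or_ge ((i : ℕ) + (j : ℕ)) M with h | h
    · rw [Nat.mod_eq_of_lt h] at hval; omega
    · rw [Nat.mod_eq_sub_mod h, Nat.mod_eq_of_lt (by omega)] at hval; omega
  -- membership
  have hin : inBC M lam ω ρ αo αe d p := by
    intro i
    by_cases hi : (i : ℕ) < lam
    · refine ⟨m, le_of_eq hdegm, ?_, ?_⟩
      · intro j s
        show (if (i + ((j : ℕ) : Fin M) : Fin M) = k0 ∧ s = s0
            then m.eval (αo g0 s0) else 0) = m.eval (αo (((i : ℕ) : Fin lam) + j) s)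
        by_cases hcon : (((i : ℕ) : Fin lam) + j = g0) ∧ s = s0
        · rw [if_pos ⟨(hkey i j hi).2 hcon.1, hcon.2⟩, hcon.1, hcon.2]
        · rw [if_neg (by
            intro hcc
            exact hcon ⟨(hkey i j hi).1 hcc.1, hcc.2⟩)]
          refine (E1 _ _ ?_).symm
          intro hpair
          rw [Prod.mk.injEq] at hpair
          exact hcon hpair
      · intro s
        show (if (i : ℕ) < lam then m.eval (αe ((i : ℕ) : Fin lam) s) else 0) = _
        rw [if_pos hi]
    · refine ⟨0, by simp, ?_, ?_⟩
      · intro j s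
        show (if (i + ((j : ℕ) : Fin M) : Fin M) = k0 ∧ s = s0
            then m.eval (αo g0 s0) else 0) = _
        rw [Polynomial.eval_zero, if_neg (fun hcc => hout i j hi hcc.1)]
      · intro s
        show (if (i : ℕ) < lam then m.eval (αe ((i : ℕ) : Fin lam) s) else 0) = _
        rw [Polynomial.eval_zero, if_neg hi]
  -- nonzero
  have hdne : d ≠ 0 := by
    intro h
    have := congrFun (congrFun h k0) s0
    rw [hd] at this
    simp at this
    exact E2 this
  -- weight
  have hwd : ∀ i : Fin M, (Finset.univ.filter fun s => d i s ≠ 0).card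
      = if i = k0 then 1 else 0 := by
    intro i
    by_cases hik : i = k0
    · rw [if_pos hik]
      have : (Finset.univ.filter fun s => d i s ≠ 0) = {s0} := by
        ext s
        simp only [Finset.mem_filter, Finset.mem_univ, true_and, Finset.mem_singleton, hd, hik]
        constructor
        · intro hs
          by_contra hss
          simp [hss] at hs
        · intro hs
          simp [hs]
          exact E2
      rw [this, Finset.card_singleton]
    · rw [if_neg hik]
      rw [Finset.card_eq_zero]
      ext s
      simp only [Finset.mem_filter, Finset.mem_univ, true_and, Finset.notMem_empty,
        iff_false, hd]
      simp [hik]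
  have hwp : ∀ i : Fin M, (Finset.univ.filter fun s => p i s ≠ 0).card
      = if (i : ℕ) < lam then ρ else 0 := by
    intro i
    by_cases hik : (i : ℕ) < lam
    · rw [if_pos hik]
      have : (Finset.univ.filter fun s => p i s ≠ 0) = Finset.univ := by
        apply Finset.filter_true_of_mem
        intro s _
        rw [hp]
        simp only [hik, if_true]
        exact E3 _ _
      rw [this, Finset.card_univ, Fintype.card_fin]
    · rw [if_neg hik]
      rw [Finset.card_eq_zero]
      ext s
      simp only [Finset.mem_filter, Finset.mem_univ, true_and, Finset.notMem_empty,
        iff_false, hp]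
      simp [hik]
  refine ⟨d, p, hin, Or.inl hdne, ?_⟩
  rw [bcWt]
  have : ∀ i : Fin M, ((Finset.univ.filter fun s => d i s ≠ 0).card
      + (Finset.univ.filter fun s => p i s ≠ 0).card)
      = ((if i = k0 then 1 else 0) + (if (i : ℕ) < lam then ρ else 0)) := by
    intro i; rw [hwd i, hwp i]
  rw [Finset.sum_congr rfl (fun i _ => this i), Finset.sum_add_distrib]
  have h1 : (∑ i : Fin M, if i = k0 then 1 else 0) = 1 := by
    rw [Finset.sum_ite_eq' Finset.univ k0 (fun _ => 1)]
    simp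
  have h2 : (∑ i : Fin M, if (i : ℕ) < lam then ρ else 0) = lam * ρ := by
    rw [Fin.sum_univ_eq_sum_range (fun n => if n < lam then ρ else 0) M]
    rw [← Finset.sum_subset (Finset.range_subset_range.mpr hlM)
      (fun x _ hx => by simp [Finset.mem_range] at hx; simp [hx])]
    rw [Finset.sum_congr rfl (fun x hx => by
      simp only [Finset.mem_range] at hx; rw [if_pos hx])]
    rw [Finset.sum_const, Finset.card_range, smul_eq_mul]
  rw [h1, h2]
  omega

end Construct

section Induction
variable {F : Type*} [Field F] [DecidableEq F] [CharP F 2] {lam ω ρ : ℕ} [NeZero lam]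
  {αo : Fin lam → Fin ω → F} {αe : Fin lam → Fin ρ → F}

lemma lower_bound_all (hω : 0 < ω)
    (hinj : Function.Injective
      (Sum.elim (fun x : Fin lam × Fin ω => αo x.1 x.2)
                (fun x : Fin lam × Fin ρ => αe x.1 x.2))) :
    ∀ (a M : ℕ), M = 2 ^ a * lam → ∀ [NeZero M],
      ∀ (d : Fin M → Fin ω → F) (p : Fin M → Fin ρ → F),
        inBC M lam ω ρ αo αe d p → (d ≠ 0 ∨ p ≠ 0) → lam * ρ + 1 ≤ bcWt d p := by
  intro a
  induction a with
  | zero =>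
    intro M hM _i d p hin hne
    have hMl : M = lam := by simpa using hM
    subst hMl
    exact base_case αo αe hω hinj d p hin hne
  | succ a ih =>
    intro M hM _i d p hin hne
    haveI : NeZero (2 ^ a * lam) := ⟨Nat.mul_ne_zero (Nat.pos_iff_ne_zero.mp (Nat.pow_pos (by norm_num : 0 < 2))) (NeZero.ne lam)⟩
    refine step_case ?_ ?_ (fun d' p' h h' => ih (2 ^ a * lam) rfl d' p' h h') d p hin hne
    · rw [hM, pow_succ]; ring
    · exact dvd_mul_left lam (2 ^ a)

end Induction

/-- The block circulant code `C_BC[μ, λ, ω, ρ]` with `μ = 2^a · λ` over a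
field of characteristic 2 (all `λ(ω+ρ)` evaluation points distinct and nonzero) has
minimum distance exactly `λρ + 1`. -/
theorem stmt11 {F : Type*} [Field F] [DecidableEq F] [CharP F 2] {a lam ω ρ : ℕ}
    [NeZero lam] (hlam : 2 ≤ lam) (hω : 0 < ω) (hρ : 0 < ρ)
    (M : ℕ) [NeZero M] (hM : M = 2 ^ a * lam)
    (αo : Fin lam → Fin ω → F) (αe : Fin lam → Fin ρ → F)
    (hinj : Function.Injective
      (Sum.elim (fun x : Fin lam × Fin ω => αo x.1 x.2)
                (fun x : Fin lam × Fin ρ => αe x.1 x.2)))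
    (h0o : ∀ j s, αo j s ≠ 0) (h0e : ∀ j s, αe j s ≠ 0) :
    (∀ (d : Fin M → Fin ω → F) (p : Fin M → Fin ρ → F),
      inBC M lam ω ρ αo αe d p → (d ≠ 0 ∨ p ≠ 0) → lam * ρ + 1 ≤ bcWt d p) ∧
    (∃ (d : Fin M → Fin ω → F) (p : Fin M → Fin ρ → F),
      inBC M lam ω ρ αo αe d p ∧ (d ≠ 0 ∨ p ≠ 0) ∧ bcWt d p = lam * ρ + 1) := by
  constructor
  · intro d p hin hne
    exact lower_bound_all hω hinj a M hM d p hin hne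
  · have hdvd : lam ∣ M := hM ▸ dvd_mul_left lam (2 ^ a)
    have hlM : lam ≤ M := Nat.le_of_dvd (NeZero.pos M) hdvd
    exact exists_word hω hdvd hlM hinj
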